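/- Let ρ± : [0,T] → (0,1) and define the quasi-static profile ρ̄(t,y) = ((ρ₊(t)-ρ₋(t))/2)y + (ρ₊(t)+ρ₋(t))/2 and the quasi-static current J̄'(t) = -(ρ₊(t)-ρ₋(t))/2. Then I(J̄, ρ̄) = 0, and I(-J̄, ρ̄) = (1/2)∫₀ᵀ [𝓗(ρ₊(t),ρ₋(t)) + 𝓗(ρ₋(t),ρ₊(t))] dt, where 𝓗(ρ,ν) = ρ log(ρ/ν) + (1-ρ)log((1-ρ)/(1-ν)). -/

import Mathlib

open MeasureTheory Set

noncomputable def Hrel (ρ ν : ℝ) : ℝ :=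
  ρ * Real.log (ρ / ν) + (1 - ρ) * Real.log ((1 - ρ) / (1 - ν))

lemma inner_eq (p m : ℝ) (hp : p ∈ Ioo (0:ℝ) 1) (hm : m ∈ Ioo (0:ℝ) 1) :
    (∫ y in Icc (-1:ℝ) 1,
      (p - m)^2 / ((((p-m)/2)*y + (p+m)/2) * (1 - (((p-m)/2)*y + (p+m)/2))))
    = 2 * (Hrel p m + Hrel m p) := by
  obtain ⟨hp0, hp1⟩ := hp
  obtain ⟨hm0, hm1⟩ := hm
  set a := (p - m)/2 with ha
  set b := (p + m)/2 with hb
  have hupos : ∀ y ∈ Icc (-1:ℝ) 1, 0 < a * y + b := by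
    intro y hy
    obtain ⟨h1, h2⟩ := hy
    rcases le_total y 0 with h | h
    · nlinarith [mul_nonneg hp0.le (by linarith : (0:ℝ) ≤ 1 + y),
        mul_nonneg hm0.le (neg_nonneg.2 h)]
    · nlinarith [mul_nonneg hm0.le (by linarith : (0:ℝ) ≤ 1 - y),
        mul_nonneg hp0.le h]
  have hult1 : ∀ y ∈ Icc (-1:ℝ) 1, a * y + b < 1 := by
    intro y hy
    obtain ⟨h1, h2⟩ := hy
    rcases le_total y 0 with h | h
    · nlinarith [mul_nonneg (by linarith : (0:ℝ) ≤ 1 - p) (by linarith : (0:ℝ) ≤ 1 + y),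
        mul_nonneg (by linarith : (0:ℝ) ≤ 1 - m) (neg_nonneg.2 h)]
    · nlinarith [mul_nonneg (by linarith : (0:ℝ) ≤ 1 - m) (by linarith : (0:ℝ) ≤ 1 - y),
        mul_nonneg (by linarith : (0:ℝ) ≤ 1 - p) h]
  by_cases hpm : p = m
  · subst hpm
    have h1 : Hrel p p = 0 := by
      simp [Hrel, div_self (ne_of_gt hp0), div_self (by linarith : (1:ℝ) - p ≠ 0)]
    simp [h1]
  -- main case
  have ha0 : a ≠ 0 := by
    rw [ha]; intro h; apply hpm; linarith [(div_eq_zero_iff.mp h).resolve_right (by norm_num)]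
  set F : ℝ → ℝ := fun y => 4*a*(Real.log (a*y+b) - Real.log (1-(a*y+b))) with hF
  have huIcc : uIcc (-1:ℝ) 1 = Icc (-1:ℝ) 1 := uIcc_of_le (by norm_num)
  have hderiv : ∀ y ∈ uIcc (-1:ℝ) 1,
      HasDerivAt F ((p - m)^2 / ((a*y+b) * (1 - (a*y+b)))) y := by
    intro y hy
    rw [huIcc] at hy
    have hu0 := hupos y hy
    have hu1 := hult1 y hy
    have hu : HasDerivAt (fun y : ℝ => a*y+b) a y := by
      simpa using ((hasDerivAt_id y).const_mul a).add_const b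
    have hlog1 : HasDerivAt (fun y : ℝ => Real.log (a*y+b)) (a / (a*y+b)) y :=
      hu.log (ne_of_gt hu0)
    have hlog2 : HasDerivAt (fun y : ℝ => Real.log (1-(a*y+b))) ((-a) / (1-(a*y+b))) y := by
      have h1 : HasDerivAt (fun y : ℝ => 1-(a*y+b)) (-a) y := by
        exact hu.const_sub 1
      exact h1.log (by linarith)
    have hd : HasDerivAt F (4*a*(a/(a*y+b) - (-a)/(1-(a*y+b)))) y :=
      ((hlog1.sub hlog2).const_mul (4*a))
    convert hd using 1
    have h2 : p - m = 2*a := by rw [ha]; ring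
    rw [h2]
    clear_value a b
    generalize hg : a*y+b = u at hu0 hu1 ⊢
    rw [div_sub_div _ _ (ne_of_gt hu0) (by linarith : (1:ℝ)-u ≠ 0), ← mul_div_assoc]
    congr 1
    ring
  have hcont : ContinuousOn (fun y => (p - m)^2 / ((a*y+b) * (1 - (a*y+b)))) (uIcc (-1:ℝ) 1) := by
    rw [huIcc]
    apply continuousOn_const.div
    · fun_prop
    · intro y hy
      exact mul_ne_zero (ne_of_gt (hupos y hy)) (ne_of_gt (by linarith [hult1 y hy]))
  have hint : IntervalIntegrable (fun y => (p - m)^2 / ((a*y+b) * (1 - (a*y+b)))) volume (-1) 1 :=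
    hcont.intervalIntegrable
  have hIcc : (∫ y in Icc (-1:ℝ) 1, (p - m)^2 / ((a*y+b) * (1 - (a*y+b))))
      = ∫ y in (-1:ℝ)..1, (p - m)^2 / ((a*y+b) * (1 - (a*y+b))) := by
    rw [intervalIntegral.integral_of_le (by norm_num : (-1:ℝ) ≤ 1),
      MeasureTheory.integral_Icc_eq_integral_Ioc]
  rw [hIcc, intervalIntegral.integral_eq_sub_of_hasDerivAt hderiv hint]
  have e1 : a*(1:ℝ)+b = p := by rw [ha, hb]; ring
  have e2 : a*(-1:ℝ)+b = m := by rw [ha, hb]; ring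
  rw [hF]
  simp only [e1, e2]
  rw [Hrel, Hrel, Real.log_div (ne_of_gt hp0) (ne_of_gt hm0),
    Real.log_div (by linarith : (1:ℝ)-p ≠ 0) (by linarith : (1:ℝ)-m ≠ 0),
    Real.log_div (ne_of_gt hm0) (ne_of_gt hp0),
    Real.log_div (by linarith : (1:ℝ)-m ≠ 0) (by linarith : (1:ℝ)-p ≠ 0), ha]
  ring

theorem stmt4 (T : ℝ) (hT : 0 < T) (ρp ρm : ℝ → ℝ)
    (hcp : Continuous ρp) (hcm : Continuous ρm)
    (hb : ∀ t, ρp t ∈ Ioo (0:ℝ) 1 ∧ ρm t ∈ Ioo (0:ℝ) 1)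
    (ρbar : ℝ → ℝ → ℝ)
    (hbar : ∀ t y, ρbar t y = ((ρp t - ρm t)/2) * y + (ρp t + ρm t)/2)
    (Jbar' : ℝ → ℝ) (hJ : ∀ t, Jbar' t = -(ρp t - ρm t)/2) :
    ((1/4) * ∫ t in Icc 0 T, ∫ y in Icc (-1:ℝ) 1,
        (Jbar' t + (ρp t - ρm t)/2)^2 / (ρbar t y * (1 - ρbar t y)) = 0) ∧
    ((1/4) * ∫ t in Icc 0 T, ∫ y in Icc (-1:ℝ) 1,
        (-Jbar' t + (ρp t - ρm t)/2)^2 / (ρbar t y * (1 - ρbar t y))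
      = (1/2) * ∫ t in Icc 0 T, (Hrel (ρp t) (ρm t) + Hrel (ρm t) (ρp t))) := by
  constructor
  · have h0 : ∀ t, (Jbar' t + (ρp t - ρm t)/2) = 0 := by
      intro t; rw [hJ]; ring
    simp [h0]
  · have h2 : ∀ t, (∫ y in Icc (-1:ℝ) 1,
        (-Jbar' t + (ρp t - ρm t)/2)^2 / (ρbar t y * (1 - ρbar t y)))
        = 2 * (Hrel (ρp t) (ρm t) + Hrel (ρm t) (ρp t)) := by
      intro t
      have hnum : -Jbar' t + (ρp t - ρm t)/2 = ρp t - ρm t := by rw [hJ]; ring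
      have := inner_eq (ρp t) (ρm t) (hb t).1 (hb t).2
      simp only [hnum, hbar]
      exact this
    simp only [h2]
    rw [integral_const_mul]
    ring
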